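/- Greedy list scheduling (assigning each job, in arbitrary order, to the currently least loaded of P machines) yields a makespan at most (∑ᵢ sᵢ)/P + maxᵢ sᵢ, and hence at most 2·OPT. -/
import Mathlib


open Finset

/-- The load of machine `m` under assignment `A` of jobs with sizes `s`. -/
def machineLoad {n P : ℕ} (s : Fin n → ℝ) (A : Fin n → Fin P) (m : Fin P) : ℝ :=
  ∑ j, if A j = m then s j else 0

/-- The load of machine `m` from the jobs preceding job `j`. -/
def partialLoad {n P : ℕ} (s : Fin n → ℝ) (A : Fin n → Fin P) (j : Fin n) (m : Fin P) : ℝ :=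
  ∑ i ∈ Finset.univ.filter (fun i => i < j), if A i = m then s i else 0

lemma sum_machineLoad {n P : ℕ} (s : Fin n → ℝ) (B : Fin n → Fin P) :
    ∑ m, machineLoad s B m = ∑ i, s i := by
  unfold machineLoad
  rw [Finset.sum_comm]
  simp

/-- Greedy list scheduling (each job, in arbitrary order, goes to the currently
least loaded machine) has makespan at most `(∑ᵢ sᵢ)/P + maxᵢ sᵢ`, and hence at
most `2 · OPT`. -/
theorem greedy_list_scheduling_bound {n P : ℕ} [NeZero n] [NeZero P]
    (s : Fin n → ℝ) (hs : ∀ i, 0 ≤ s i) (A : Fin n → Fin P)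
    (hgreedy : ∀ j : Fin n, ∀ m : Fin P, partialLoad s A j (A j) ≤ partialLoad s A j m) :
    (⨆ m : Fin P, machineLoad s A m) ≤ (∑ i, s i) / P + (⨆ i : Fin n, s i) ∧
    (⨆ m : Fin P, machineLoad s A m) ≤
      2 * ⨅ B : Fin n → Fin P, ⨆ m : Fin P, machineLoad s B m := by
  have hPpos : (0:ℝ) < P := by
    exact_mod_cast Nat.pos_of_ne_zero (NeZero.ne P)
  have hsum_nonneg : (0:ℝ) ≤ ∑ i, s i := Finset.sum_nonneg fun i _ => hs i
  have hsup_s : ∀ i, s i ≤ ⨆ i, s i := fun i =>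
    le_ciSup (Set.Finite.bddAbove (Set.finite_range s)) i
  have hsup_nonneg : (0:ℝ) ≤ ⨆ i, s i :=
    le_trans (hs ⟨0, Nat.pos_of_ne_zero (NeZero.ne n)⟩)
      (hsup_s ⟨0, Nat.pos_of_ne_zero (NeZero.ne n)⟩)
  -- key per-machine bound
  have key : ∀ m, machineLoad s A m ≤ (∑ i, s i) / P + ⨆ i, s i := by
    intro m
    have hml : machineLoad s A m = ∑ i ∈ univ.filter (fun i => A i = m), s i := by
      rw [machineLoad, Finset.sum_filter]
    by_cases hT : (univ.filter (fun i => A i = m)).Nonempty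
    · set T := univ.filter (fun i => A i = m) with hTdef
      set j := T.max' hT with hjdef
      have hjT : j ∈ T := T.max'_mem hT
      have hAj : A j = m := (Finset.mem_filter.mp hjT).2
      have herase : T.erase j = univ.filter (fun i => i < j ∧ A i = m) := by
        ext i
        simp only [Finset.mem_erase, hTdef, Finset.mem_filter, Finset.mem_univ, true_and]
        constructor
        · rintro ⟨hne, hAi⟩
          exact ⟨lt_of_le_of_ne (T.le_max' i (by simp [hTdef, hAi])) hne, hAi⟩
        · rintro ⟨hlt, hAi⟩
          exact ⟨ne_of_lt hlt, hAi⟩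
      have hpl : partialLoad s A j m = ∑ i ∈ T.erase j, s i := by
        rw [partialLoad, ← Finset.sum_filter, Finset.filter_filter, herase]
      have hsplit : machineLoad s A m = s j + partialLoad s A j m := by
        rw [hml, hpl, Finset.add_sum_erase _ _ hjT]
      have hPbound : partialLoad s A j m ≤ (∑ i, s i) / P := by
        rw [le_div_iff₀ hPpos]
        have h1 : partialLoad s A j m * P = ∑ _m' : Fin P, partialLoad s A j (A j) := by
          rw [hAj]; simp [mul_comm]
        rw [h1]
        have h2 : ∑ m' : Fin P, partialLoad s A j (A j) ≤ ∑ m' : Fin P, partialLoad s A j m' :=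
          Finset.sum_le_sum fun m' _ => hgreedy j m'
        refine h2.trans ?_
        have h3 : ∑ m' : Fin P, partialLoad s A j m'
            = ∑ i ∈ univ.filter (fun i => i < j), s i := by
          unfold partialLoad
          rw [Finset.sum_comm]
          simp
        rw [h3]
        exact Finset.sum_le_sum_of_subset_of_nonneg (Finset.filter_subset _ _)
          (fun i _ _ => hs i)
      rw [hsplit]
      have := hsup_s j
      linarith [hPbound]
    · rw [Finset.not_nonempty_iff_eq_empty] at hT
      rw [hml, hT]
      simp only [Finset.sum_empty]
      positivity
  have hbddB : ∀ B : Fin n → Fin P, BddAbove (Set.range fun m => machineLoad s B m) :=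
    fun B => Set.Finite.bddAbove (Set.finite_range _)
  have hOPT1 : (∑ i, s i) / P ≤ ⨅ B : Fin n → Fin P, ⨆ m, machineLoad s B m := by
    refine le_ciInf fun B => ?_
    rw [div_le_iff₀ hPpos]
    have h1 : ∑ i, s i = ∑ m, machineLoad s B m := (sum_machineLoad s B).symm
    have h2 : ∑ m, machineLoad s B m ≤ ∑ _m : Fin P, ⨆ m, machineLoad s B m :=
      Finset.sum_le_sum fun m _ => le_ciSup (hbddB B) m
    rw [h1]
    refine h2.trans ?_
    simp [mul_comm]
  have hOPT2 : (⨆ i, s i) ≤ ⨅ B : Fin n → Fin P, ⨆ m, machineLoad s B m := by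
    refine le_ciInf fun B => ciSup_le fun i => ?_
    have h1 : s i ≤ machineLoad s B (B i) := by
      unfold machineLoad
      have := Finset.single_le_sum (f := fun j => if B j = B i then s j else 0)
        (fun j _ => by by_cases h : B j = B i <;> simp [h, hs j]) (Finset.mem_univ i)
      simpa using this
    exact h1.trans (le_ciSup (hbddB B) (B i))
  have h1 := ciSup_le key
  refine ⟨h1, h1.trans ?_⟩
  have : 2 * (⨅ B : Fin n → Fin P, ⨆ m, machineLoad s B m)
      = (⨅ B : Fin n → Fin P, ⨆ m, machineLoad s B m)
      + (⨅ B : Fin n → Fin P, ⨆ m, machineLoad s B m) := by ring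
  rw [this]
  exact add_le_add hOPT1 hOPT2
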